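/- With f_h defined as f_h(x) = e^{x²/2} ∫_{-∞}^x (h(y) - E[h(N)]) e^{-y²/2} dy for Borel measurable h : ℝ → [0,1], there is a version of the derivative f_h' satisfying f_h'(x) - x·f_h(x) = h(x) - E[h(N)] for almost every x ∈ ℝ. -/

import Mathlib

open MeasureTheory ProbabilityTheory Real

open Set Filter in
/-- a.e. version of the fundamental theorem of calculus for indefinite integrals of
nonnegative integrable functions. -/
lemma aux_ae_hasDerivAt_integral_Iic (g : ℝ → ℝ) (hg : Measurable g) (h0 : ∀ y, 0 ≤ g y)
    (hint : MeasureTheory.Integrable g) :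
    ∀ᵐ x ∂(volume : Measure ℝ),
      HasDerivAt (fun x => ∫ y in Set.Iic x, g y) (g x) x := by
  set G : ℝ → ℝ := fun x => ∫ y in Set.Iic x, g y with hGdef
  have hmono : Monotone G := fun a b hab =>
    setIntegral_mono_set hint.integrableOn (ae_of_all _ h0)
      ((Iic_subset_Iic.2 hab).eventuallyLE)
  have hdiff : ∀ a b : ℝ, a ≤ b → G b - G a = ∫ y in Ioc a b, g y := by
    intro a b hab
    rw [hGdef]
    rw [intervalIntegral.integral_Iic_sub_Iic hint.integrableOn hint.integrableOn,
      intervalIntegral.integral_of_le hab]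
  have hcont : Continuous G := by
    have h1 : Continuous fun b => ∫ x in (0:ℝ)..b, g x := hint.continuous_primitive 0
    have h2 : G = fun b => G 0 + ∫ x in (0:ℝ)..b, g x := by
      funext b
      rw [← intervalIntegral.integral_Iic_sub_Iic hint.integrableOn hint.integrableOn]
      simp [hGdef]
    rw [h2]
    exact continuous_const.add h1
  have hstieq : ∀ x, hmono.stieltjesFunction x = G x := by
    intro x
    rw [hmono.stieltjesFunction_eq]
    exact rightLim_eq_of_tendsto
      ((hcont.tendsto x).mono_left nhdsWithin_le_nhds)
  have hmeaseq : hmono.stieltjesFunction.measure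
      = (volume : Measure ℝ).withDensity (fun y => ENNReal.ofReal (g y)) := by
    refine MeasureTheory.Measure.ext_of_Ioc _ _ (fun a b hab => ?_)
    rw [StieltjesFunction.measure_Ioc, MeasureTheory.withDensity_apply _ measurableSet_Ioc,
      ← MeasureTheory.ofReal_integral_eq_lintegral_ofReal hint.integrableOn (ae_of_all _ h0),
      hstieq, hstieq, hdiff a b hab.le]
  have hrn := MeasureTheory.Measure.rnDeriv_withDensity (volume : Measure ℝ)
      (hg.ennreal_ofReal)
  filter_upwards [hmono.ae_hasDerivAt, hrn] with x hx hx2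
  rw [hmeaseq, hx2, ENNReal.toReal_ofReal (h0 x)] at hx
  exact hx

/-- There is a version of the derivative of the Stein equation solution `f_h`
satisfying `f_h'(x) - x f_h(x) = h(x) - E[h(N)]` for a.e. `x ∈ ℝ`. -/
theorem stein_solution_solves_stein_equation
    (h : ℝ → ℝ) (hmeas : Measurable h) (hrange : ∀ y, h y ∈ Set.Icc (0:ℝ) 1)
    (fh : ℝ → ℝ)
    (hfh : ∀ x, fh x =
      Real.exp (x ^ 2 / 2) *
        ∫ y in Set.Iic x,
          (h y - ∫ z, h z ∂(gaussianReal 0 1)) * Real.exp (-(y ^ 2) / 2)) :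
    ∃ fh' : ℝ → ℝ,
      ∀ᵐ x ∂(volume : Measure ℝ),
        HasDerivAt fh (fh' x) x ∧
        fh' x - x * fh x = h x - ∫ z, h z ∂(gaussianReal 0 1) := by
  set μ : ℝ := ∫ z, h z ∂(gaussianReal 0 1) with hμ
  have hμ0 : 0 ≤ μ := integral_nonneg fun z => (hrange z).1
  set g₁ : ℝ → ℝ := fun y => h y * Real.exp (-(y ^ 2) / 2) with hg₁
  set g₂ : ℝ → ℝ := fun y => μ * Real.exp (-(y ^ 2) / 2) with hg₂
  have Ig : MeasureTheory.Integrable (fun y : ℝ => Real.exp (-(y ^ 2) / 2)) := by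
    have h1 := integrable_exp_neg_mul_sq (show (0:ℝ) < 1/2 by norm_num)
    have h2 : (fun y : ℝ => Real.exp (-(y ^ 2) / 2)) = fun y => Real.exp (-(1/2) * y ^ 2) := by
      funext y; congr 1; ring
    rw [h2]; exact h1
  have hgm : Measurable fun y : ℝ => Real.exp (-(y ^ 2) / 2) := by fun_prop
  have Ig₁ : MeasureTheory.Integrable g₁ := by
    refine Ig.mono ((hmeas.mul hgm).aestronglyMeasurable) (ae_of_all _ fun y => ?_)
    have h1 := (hrange y).1
    have h2 := (hrange y).2
    have h3 : (0:ℝ) < Real.exp (-(y ^ 2) / 2) := Real.exp_pos _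
    simp only [hg₁, Real.norm_eq_abs]
    rw [abs_of_nonneg (mul_nonneg h1 h3.le), abs_of_nonneg h3.le]
    nlinarith
  have Ig₂ : MeasureTheory.Integrable g₂ := Ig.const_mul μ
  have h01 : ∀ y, 0 ≤ g₁ y := fun y => mul_nonneg (hrange y).1 (Real.exp_pos _).le
  have h02 : ∀ y, 0 ≤ g₂ y := fun y => mul_nonneg hμ0 (Real.exp_pos _).le
  have hF : ∀ x, fh x = Real.exp (x ^ 2 / 2) *
      ((∫ y in Set.Iic x, g₁ y) - ∫ y in Set.Iic x, g₂ y) := by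
    intro x
    rw [hfh x]
    congr 1
    rw [← MeasureTheory.integral_sub Ig₁.integrableOn Ig₂.integrableOn]
    congr 1
    funext y
    simp only [hg₁, hg₂]
    ring
  refine ⟨fun x => x * fh x + (h x - μ), ?_⟩
  filter_upwards [aux_ae_hasDerivAt_integral_Iic g₁ (hmeas.mul hgm) h01 Ig₁,
    aux_ae_hasDerivAt_integral_Iic g₂ ((measurable_const).mul hgm) h02 Ig₂] with x h1 h2
  refine ⟨?_, by ring⟩
  have hE : HasDerivAt (fun x : ℝ => Real.exp (x ^ 2 / 2)) (x * Real.exp (x ^ 2 / 2)) x := by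
    have hp : HasDerivAt (fun x : ℝ => x ^ 2 / 2) x x := by
      simpa using (hasDerivAt_pow 2 x).div_const 2
    simpa [mul_comm] using hp.exp
  have hD := hE.mul (h1.sub h2)
  have hfun : fh = fun x => Real.exp (x ^ 2 / 2) *
      ((∫ y in Set.Iic x, g₁ y) - ∫ y in Set.Iic x, g₂ y) := funext hF
  rw [hfun]
  refine hD.congr_deriv ?_
  have e0 : Real.exp (x ^ 2 / 2) * Real.exp (-(x ^ 2) / 2) = 1 := by
    rw [← Real.exp_add, show x ^ 2 / 2 + -(x ^ 2) / 2 = 0 by ring, Real.exp_zero]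
  simp only [hg₁, hg₂, Pi.sub_apply]
  linear_combination (h x - μ) * e0
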